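/- Let M be a complex normed space and L : M → M a bounded linear map, and for i = 1, 2 let (N_i, α_i, E_i) be nondegenerate reversible lifts of L. If θ : N₁ → N₂ is a linear map satisfying θ ∘ α₁ = α₂ ∘ θ and E₂ ∘ θ = E₁, then θ is injective. -/
import Mathlib


/-- Let `M` be a complex normed space and `L : M → M` bounded linear,
and for `i = 1, 2` let `(Nᵢ, αᵢ, Eᵢ)` be nondegenerate reversible lifts of `L`
(`αᵢ` a surjective linear isometry of the normed space `Nᵢ`, `Eᵢ : Nᵢ → M` linear with
`‖Eᵢ‖ ≤ 1` and `Eᵢ ∘ αᵢ = L ∘ Eᵢ`; nondegeneracy: `Eᵢ(αᵢ^{-n}(y)) = 0` for all `n ≥ 0`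
implies `y = 0`).  If `θ : N₁ → N₂` is a linear map with `θ ∘ α₁ = α₂ ∘ θ` and
`E₂ ∘ θ = E₁`, then `θ` is injective. -/
theorem stmt15 {M N₁ N₂ : Type*} [NormedAddCommGroup M] [NormedSpace ℂ M]
    [NormedAddCommGroup N₁] [NormedSpace ℂ N₁]
    [NormedAddCommGroup N₂] [NormedSpace ℂ N₂]
    (L : M →L[ℂ] M)
    (α₁ : N₁ ≃ₗᵢ[ℂ] N₁) (E₁ : N₁ →L[ℂ] M) (hE₁ : ‖E₁‖ ≤ 1)
    (hEq₁ : ∀ y : N₁, E₁ (α₁ y) = L (E₁ y))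
    (hnd₁ : ∀ y : N₁, (∀ n : ℕ, E₁ ((α₁ ^ (-(n : ℤ))) y) = 0) → y = 0)
    (α₂ : N₂ ≃ₗᵢ[ℂ] N₂) (E₂ : N₂ →L[ℂ] M) (hE₂ : ‖E₂‖ ≤ 1)
    (hEq₂ : ∀ y : N₂, E₂ (α₂ y) = L (E₂ y))
    (hnd₂ : ∀ y : N₂, (∀ n : ℕ, E₂ ((α₂ ^ (-(n : ℤ))) y) = 0) → y = 0)
    (θ : N₁ →ₗ[ℂ] N₂)
    (hθα : ∀ y : N₁, θ (α₁ y) = α₂ (θ y))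
    (hθE : ∀ y : N₁, E₂ (θ y) = E₁ y) :
    Function.Injective θ := by
  have hinv : ∀ y : N₁, θ (α₁⁻¹ y) = α₂⁻¹ (θ y) := by
    intro y
    have h := hθα (α₁.symm y)
    rw [α₁.apply_symm_apply] at h
    show θ (α₁.symm y) = α₂.symm (θ y)
    rw [h, α₂.symm_apply_apply]
  have key : ∀ (n : ℕ) (y : N₁), θ ((α₁ ^ (-(n : ℤ))) y) = (α₂ ^ (-(n : ℤ))) (θ y) := by
    intro n
    induction n with
    | zero => intro y; simp
    | succ k ih =>
      intro y
      have h1 : (-(↑(k+1) : ℤ)) = (-(k : ℤ)) + (-1) := by push_cast; ring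
      rw [h1, zpow_add, zpow_add]
      simp only [LinearIsometryEquiv.coe_mul, Function.comp_apply]
      rw [zpow_neg_one, zpow_neg_one, ih, hinv]
  rw [injective_iff_map_eq_zero]
  intro y hy
  apply hnd₁
  intro n
  rw [← hθE, key, hy]
  simp
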